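/- (Series-parallel critical lemma.) Let G be a series-parallel DAG with terminals s and t, and p nominal processing times. If G(p) is quasi-critical (every job i satisfies L⁰(s,i) + L⁰(i,t) = L⁰(s,t)), then G(p) is critical (every s–t path has length L⁰(s,t)). -/

import Mathlib

/-- Length of a path (given as a list of vertices) when each arc `(i,j)` has
length `q i` (the duration of its source vertex). -/
def PathLen {V : Type*} (q : V → ℝ) (l : List V) : ℝ := (l.dropLast.map q).sum

/-- `l` is a path from `i` to `j` in the digraph with arc relation `A`. -/
def IsPath {V : Type*} (A : V → V → Prop) (i j : V) (l : List V) : Prop :=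
  l ≠ [] ∧ l.Chain' A ∧ l.head? = some i ∧ l.getLast? = some j

/-- Length of a path for arc-indexed weights `w`. -/
def LenW {V : Type*} (w : V → V → ℝ) : List V → ℝ
  | a :: b :: l => w a b + LenW w (b :: l)
  | _ => 0

/-- `x` is a schedule of the precedence graph `(V, A)` with durations `q` and source `s`. -/
def Sched {V : Type*} (A : V → V → Prop) (s : V) (q x : V → ℝ) : Prop :=
  x s = 0 ∧ (∀ v, 0 ≤ x v) ∧ ∀ i j, A i j → q i ≤ x j - x i

/-- `H` is `x`-anchored for the uncertainty set `Δ`. -/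
def XAnchored {V : Type*} (A : V → V → Prop) (s : V) (p : V → ℝ)
    (Δ : Set (V → ℝ)) (x : V → ℝ) (H : Set V) : Prop :=
  ∀ δ ∈ Δ, ∃ y, Sched A s (fun v => p v + δ v) y ∧ ∀ i ∈ H, y i = x i

/-- `L` is the longest `i`–`j` path length under durations `q`. -/
def IsLongest {V : Type*} (A : V → V → Prop) (q : V → ℝ) (i j : V) (L : ℝ) : Prop :=
  IsGreatest {r | ∃ l, IsPath A i j l ∧ PathLen q l = r} L

/-- `L` is the worst-case longest `i`–`j` path length over the uncertainty set `Δ`. -/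
def IsWorst {V : Type*} (A : V → V → Prop) (p : V → ℝ) (Δ : Set (V → ℝ))
    (i j : V) (L : ℝ) : Prop :=
  IsGreatest {r | ∃ δ ∈ Δ, ∃ l, IsPath A i j l ∧ PathLen (fun v => p v + δ v) l = r} L

/-- Series-parallel digraphs with terminals, living inside an ambient vertex type:
`IsSP A S s t` means the arc relation `A`, supported on the vertex set `S`, is a
series-parallel digraph with terminals `s` and `t`. -/
inductive IsSP {V : Type*} : (V → V → Prop) → Set V → V → V → Prop
  | base (s t : V) (h : s ≠ t) :
      IsSP (fun a b => a = s ∧ b = t) {s, t} s t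
  | series {A₁ A₂ : V → V → Prop} {S₁ S₂ : Set V} {s m t : V} :
      IsSP A₁ S₁ s m → IsSP A₂ S₂ m t → S₁ ∩ S₂ = {m} →
      IsSP (fun a b => A₁ a b ∨ A₂ a b) (S₁ ∪ S₂) s t
  | parallel {A₁ A₂ : V → V → Prop} {S₁ S₂ : Set V} {s t : V} :
      IsSP A₁ S₁ s t → IsSP A₂ S₂ s t → S₁ ∩ S₂ = {s, t} →
      2 < S₁.ncard → 2 < S₂.ncard →
      IsSP (fun a b => A₁ a b ∨ A₂ a b) (S₁ ∪ S₂) s t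

namespace SPProof

variable {V : Type*}

lemma chain'_iff {A : V → V → Prop} {a : V} {l : List V} :
    List.Chain' A (a :: l) ↔ List.Chain A a l := Iff.rfl

lemma pathLen_single (q : V → ℝ) (v : V) : PathLen q [v] = 0 := by simp [PathLen]

lemma pathLen_cons (q : V → ℝ) (a : V) {l : List V} (h : l ≠ []) :
    PathLen q (a :: l) = q a + PathLen q l := by
  cases l with
  | nil => exact absurd rfl h
  | cons b r => simp [PathLen]

lemma isPath_single (A : V → V → Prop) (v : V) : IsPath A v v [v] :=
  ⟨by simp, .singleton _, rfl, rfl⟩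

lemma _root_.IsPath.mono {A B : V → V → Prop} {i j : V} {l : List V}
    (h : IsPath A i j l) (hAB : ∀ a b, A a b → B a b) : IsPath B i j l :=
  ⟨h.1, List.IsChain.imp hAB h.2.1, h.2.2.1, h.2.2.2⟩

lemma pathLen_append_aux (q : V → ℝ) : ∀ (l : List V) (b : V) (l'' : List V),
    l.getLast? = some b →
    PathLen q (l ++ l'') = PathLen q l + PathLen q (b :: l'')
  | [], b, l'', h => by simp at h
  | [a], b, l'', h => by
      simp only [List.getLast?_singleton, Option.some_inj] at h
      subst h
      cases l'' with
      | nil => simp [pathLen_single]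
      | cons c r => rw [List.singleton_append, pathLen_single, zero_add]
  | a :: c :: r, b, l'', h => by
      rw [List.getLast?_cons_cons] at h
      have := pathLen_append_aux q (c :: r) b l'' h
      rw [List.cons_append, pathLen_cons q a (by simp), pathLen_cons q a (by simp), this, add_assoc]

lemma pathLen_append (q : V → ℝ) {l l' : List V} {b : V}
    (h : l.getLast? = some b) (h' : l'.head? = some b) :
    PathLen q (l ++ l'.tail) = PathLen q l + PathLen q l' := by
  cases l' with
  | nil => simp at h'
  | cons c r =>
    simp only [List.head?_cons, Option.some_inj] at h'
    subst h'
    exact pathLen_append_aux q l c r h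

lemma getLast?_cons' {l : List V} (a : V) (h : l ≠ []) : (a :: l).getLast? = l.getLast? := by
  cases l with
  | nil => exact absurd rfl h
  | cons b r => exact List.getLast?_cons_cons

lemma isPath_append {A : V → V → Prop} {a b c : V} {l l' : List V}
    (h : IsPath A a b l) (h' : IsPath A b c l') :
    IsPath A a c (l ++ l'.tail) := by
  obtain ⟨hne, hch, hhd, hlast⟩ := h
  obtain ⟨hne', hch', hhd', hlast'⟩ := h'
  cases l' with
  | nil => exact absurd rfl hne'
  | cons bb r =>
    simp only [List.head?_cons, Option.some_inj] at hhd'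
    subst hhd'
    cases r with
    | nil =>
      simp only [List.getLast?_singleton, Option.some_inj] at hlast'
      subst hlast'
      simpa using ⟨hne, hch, hhd, hlast⟩
    | cons d r' =>
      have harc : A bb d := (List.isChain_cons_cons.mp hch').1
      simp only [List.tail_cons]
      refine ⟨by simp [hne], ?_, ?_, ?_⟩
      · refine List.IsChain.append hch (List.isChain_cons_cons.mp hch').2 ?_
        intro x hx y hy
        rw [hlast] at hx
        simp only [Option.mem_def, Option.some_inj] at hx
        simp only [List.head?_cons, Option.mem_def, Option.some_inj] at hy
        subst hx; subst hy
        exact harc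
      · cases l with
        | nil => exact absurd rfl hne
        | cons a' r'' => simpa using hhd
      · rw [List.getLast?_append_of_ne_nil _ (by simp)]
        rw [← List.getLast?_cons_cons (a := bb)]
        exact hlast'

lemma last_arc {B : V → V → Prop} : ∀ (l : List V) (a b : V), List.Chain B a l →
    (a :: l).getLast? = some b → l ≠ [] → ∃ x, B x b
  | [], _, _, _, _, h => absurd rfl h
  | [c], a, b, hch, hl, _ => by
      rw [List.getLast?_cons_cons, List.getLast?_singleton] at hl
      obtain rfl := Option.some_inj.mp hl
      exact ⟨a, (List.chain_cons.mp hch).1⟩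
  | c :: d :: r, a, b, hch, hl, _ =>
      last_arc (d :: r) c b (List.chain_cons.mp hch).2
        (by rwa [List.getLast?_cons_cons] at hl) (by simp)

lemma chain_prop {A C : V → V → Prop} (h : ∀ x y z, C x y → A y z → C y z) :
    ∀ (l : List V) (x y : V), C x y → List.Chain A y l → List.Chain C y l
  | [], _, _, _, _ => List.Chain.nil
  | z :: r, x, y, hxy, hch => by
      obtain ⟨hyz, hch'⟩ := List.chain_cons.mp hch
      exact List.Chain.cons (h x y z hxy hyz) (chain_prop h r y z (h x y z hxy hyz) hch')

lemma chain_fwd {A C : V → V → Prop} {T : Set V} (h : ∀ x y, x ∈ T → A x y → C x y ∧ y ∈ T) :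
    ∀ (l : List V) (a : V), a ∈ T → List.Chain A a l → List.Chain C a l
  | [], _, _, _ => .nil
  | b :: r, a, ha, hch => by
      obtain ⟨hab, hch'⟩ := List.chain_cons.mp hch
      obtain ⟨hC, hb⟩ := h a b ha hab
      exact .cons hC (chain_fwd h r b hb hch')

lemma chain_bwd {A C : V → V → Prop} {T : Set V} (h : ∀ x y, A x y → y ∈ T → C x y ∧ x ∈ T) :
    ∀ (l : List V) (a u : V), List.Chain A a l → (a :: l).getLast? = some u → u ∈ T →
      List.Chain C a l ∧ a ∈ T
  | [], a, u, _, hl, hu => by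
      rw [List.getLast?_singleton] at hl
      obtain rfl := Option.some_inj.mp hl
      exact ⟨.nil, hu⟩
  | b :: r, a, u, hch, hl, hu => by
      obtain ⟨hab, hch'⟩ := List.chain_cons.mp hch
      obtain ⟨hCr, hb⟩ := chain_bwd h r b u hch' (by rwa [List.getLast?_cons_cons] at hl) hu
      obtain ⟨hC, ha⟩ := h a b hab hb
      exact ⟨.cons hC hCr, ha⟩

lemma _root_.IsSP.src_mem {A : V → V → Prop} {S : Set V} {s t : V} (h : IsSP A S s t) : s ∈ S := by
  induction h with
  | base s t h => exact Set.mem_insert _ _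
  | series h1 h2 hI ih1 ih2 => exact Set.mem_union_left _ ih1
  | parallel h1 h2 hI c1 c2 ih1 ih2 => exact Set.mem_union_left _ ih1

lemma _root_.IsSP.tgt_mem {A : V → V → Prop} {S : Set V} {s t : V} (h : IsSP A S s t) : t ∈ S := by
  induction h with
  | base s t h => exact Set.mem_insert_iff.mpr (Or.inr rfl)
  | series h1 h2 hI ih1 ih2 => exact Set.mem_union_right _ ih2
  | parallel h1 h2 hI c1 c2 ih1 ih2 => exact Set.mem_union_left _ ih1

lemma _root_.IsSP.ne {A : V → V → Prop} {S : Set V} {s t : V} (h : IsSP A S s t) : s ≠ t := by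
  induction h with
  | base s t h => exact h
  | @series A₁ A₂ S₁ S₂ s m t h1 h2 hI ih1 ih2 =>
    intro hst
    have : s ∈ S₁ ∩ S₂ := ⟨h1.src_mem, by rw [hst]; exact h2.tgt_mem⟩
    rw [hI] at this
    exact ih1 this
  | parallel h1 h2 hI c1 c2 ih1 ih2 => exact ih1

lemma _root_.IsSP.arc_mem {A : V → V → Prop} {S : Set V} {s t : V} (h : IsSP A S s t) :
    ∀ a b, A a b → a ∈ S ∧ b ∈ S := by
  induction h with
  | base s t h =>
    intro a b hab
    obtain ⟨rfl, rfl⟩ := hab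
    exact ⟨Set.mem_insert _ _, Set.mem_insert_iff.mpr (Or.inr rfl)⟩
  | series h1 h2 hI ih1 ih2 =>
    intro a b hab
    rcases hab with h' | h'
    · exact ⟨Set.mem_union_left _ (ih1 a b h').1, Set.mem_union_left _ (ih1 a b h').2⟩
    · exact ⟨Set.mem_union_right _ (ih2 a b h').1, Set.mem_union_right _ (ih2 a b h').2⟩
  | parallel h1 h2 hI c1 c2 ih1 ih2 =>
    intro a b hab
    rcases hab with h' | h'
    · exact ⟨Set.mem_union_left _ (ih1 a b h').1, Set.mem_union_left _ (ih1 a b h').2⟩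
    · exact ⟨Set.mem_union_right _ (ih2 a b h').1, Set.mem_union_right _ (ih2 a b h').2⟩

lemma _root_.IsSP.no_in {A : V → V → Prop} {S : Set V} {s t : V} (h : IsSP A S s t) :
    ∀ a, ¬ A a s := by
  induction h with
  | base s t h => intro a hab; exact h hab.2
  | @series A₁ A₂ S₁ S₂ s m t h1 h2 hI ih1 ih2 =>
    intro a hab
    rcases hab with h' | h'
    · exact ih1 a h'
    · have : s ∈ S₁ ∩ S₂ := ⟨h1.src_mem, (h2.arc_mem a s h').2⟩
      rw [hI] at this
      exact h1.ne this
  | parallel h1 h2 hI c1 c2 ih1 ih2 =>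
    intro a hab
    rcases hab with h' | h'
    · exact ih1 a h'
    · exact ih2 a h'

lemma _root_.IsSP.no_out {A : V → V → Prop} {S : Set V} {s t : V} (h : IsSP A S s t) :
    ∀ b, ¬ A t b := by
  induction h with
  | base s t h => intro b hab; exact h hab.1.symm
  | @series A₁ A₂ S₁ S₂ s m t h1 h2 hI ih1 ih2 =>
    intro b hab
    rcases hab with h' | h'
    · have : t ∈ S₁ ∩ S₂ := ⟨(h1.arc_mem t b h').1, h2.tgt_mem⟩
      rw [hI] at this
      exact h2.ne this.symm
    · exact ih2 b h'
  | parallel h1 h2 hI c1 c2 ih1 ih2 =>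
    intro b hab
    rcases hab with h' | h'
    · exact ih1 b h'
    · exact ih2 b h'

lemma _root_.IsSP.closed_trivial {A : V → V → Prop} {S : Set V} {s t : V} (h : IsSP A S s t) :
    ∀ (v : V) (l : List V), IsPath A v v l → l = [v] := by
  induction h with
  | base s t hst =>
    intro v l hp
    obtain ⟨hne, hch, hhd, hlast⟩ := hp
    cases l with
    | nil => exact absurd rfl hne
    | cons a r =>
      simp only [List.head?_cons, Option.some_inj] at hhd
      subst hhd
      cases r with
      | nil => rfl
      | cons b r' =>
        obtain ⟨⟨rfl, rfl⟩, hch'⟩ := List.isChain_cons_cons.mp hch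
        cases r' with
        | nil =>
          simp only [List.getLast?_cons_cons, List.getLast?_singleton, Option.some_inj] at hlast
          exact absurd hlast hst.symm
        | cons c r'' =>
          obtain ⟨⟨hts, _⟩, _⟩ := List.isChain_cons_cons.mp hch'
          exact absurd hts.symm hst
  | @series A₁ A₂ S₁ S₂ s m t h1 h2 hI ih1 ih2 =>
    intro v l hp
    obtain ⟨hne, hch, hhd, hlast⟩ := hp
    cases l with
    | nil => exact absurd rfl hne
    | cons a r =>
      simp only [List.head?_cons, Option.some_inj] at hhd
      subst hhd
      cases r with
      | nil => rfl
      | cons b r' =>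
        exfalso
        have harc : A₁ a b ∨ A₂ a b := (List.isChain_cons_cons.mp hch).1
        rcases harc with h' | h'
        · -- backward: all arcs A₁
          have bwdpack : ∀ x y, (A₁ x y ∨ A₂ x y) → y ∈ S₁ → A₁ x y ∧ x ∈ S₁ := by
            intro x y hxy hy
            rcases hxy with h'' | h''
            · exact ⟨h'', (h1.arc_mem x y h'').1⟩
            · exfalso
              have : y ∈ S₁ ∩ S₂ := ⟨hy, (h2.arc_mem x y h'').2⟩
              rw [hI] at this
              obtain rfl := this
              exact h2.no_in x h''
          have hv1 : a ∈ S₁ := (h1.arc_mem a b h').1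
          obtain ⟨hC, _⟩ := chain_bwd bwdpack (b :: r') a a (chain'_iff.mp hch) hlast hv1
          have := ih1 a (a :: b :: r') ⟨by simp, chain'_iff.mpr hC, rfl, hlast⟩
          simp at this
        · -- forward: all arcs A₂
          have fwdpack : ∀ x y, x ∈ S₂ → (A₁ x y ∨ A₂ x y) → A₂ x y ∧ y ∈ S₂ := by
            intro x y hx hxy
            rcases hxy with h'' | h''
            · exfalso
              have : x ∈ S₁ ∩ S₂ := ⟨(h1.arc_mem x y h'').1, hx⟩
              rw [hI] at this
              obtain rfl := this
              exact h1.no_out y h''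
            · exact ⟨h'', (h2.arc_mem x y h'').2⟩
          have hv2 : a ∈ S₂ := (h2.arc_mem a b h').1
          have hC := chain_fwd fwdpack (b :: r') a hv2 (chain'_iff.mp hch)
          have := ih2 a (a :: b :: r') ⟨by simp, chain'_iff.mpr hC, rfl, hlast⟩
          simp at this
  | @parallel A₁ A₂ S₁ S₂ s t h1 h2 hI hc1 hc2 ih1 ih2 =>
    intro v l hp
    obtain ⟨hne, hch, hhd, hlast⟩ := hp
    cases l with
    | nil => exact absurd rfl hne
    | cons a r =>
      simp only [List.head?_cons, Option.some_inj] at hhd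
      subst hhd
      cases r with
      | nil => rfl
      | cons b r' =>
        exfalso
        have prop1 : ∀ x y z, A₁ x y → (A₁ y z ∨ A₂ y z) → A₁ y z := by
          intro x y z hxy hyz
          rcases hyz with h' | h'
          · exact h'
          · exfalso
            have hy : y ∈ S₁ ∩ S₂ := ⟨(h1.arc_mem x y hxy).2, (h2.arc_mem y z h').1⟩
            rw [hI] at hy
            simp only [Set.mem_insert_iff, Set.mem_singleton_iff] at hy
            rcases hy with rfl | rfl
            · exact h1.no_in x hxy
            · exact h2.no_out z h'
        have prop2 : ∀ x y z, A₂ x y → (A₁ y z ∨ A₂ y z) → A₂ y z := by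
          intro x y z hxy hyz
          rcases hyz with h' | h'
          · exfalso
            have hy : y ∈ S₁ ∩ S₂ := ⟨(h1.arc_mem y z h').1, (h2.arc_mem x y hxy).2⟩
            rw [hI] at hy
            simp only [Set.mem_insert_iff, Set.mem_singleton_iff] at hy
            rcases hy with rfl | rfl
            · exact h2.no_in x hxy
            · exact h1.no_out z h'
          · exact h'
        obtain ⟨hvb, hch'⟩ := List.chain_cons.mp (chain'_iff.mp hch)
        rcases hvb with h' | h'
        · have hC : List.Chain A₁ a (b :: r') :=
            List.chain_cons.mpr ⟨h', chain_prop prop1 r' a b h' hch'⟩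
          have := ih1 a (a :: b :: r') ⟨by simp, chain'_iff.mpr hC, rfl, hlast⟩
          simp at this
        · have hC : List.Chain A₂ a (b :: r') :=
            List.chain_cons.mpr ⟨h', chain_prop prop2 r' a b h' hch'⟩
          have := ih2 a (a :: b :: r') ⟨by simp, chain'_iff.mpr hC, rfl, hlast⟩
          simp at this

lemma _root_.IsSP.connect {A : V → V → Prop} {S : Set V} {s t : V} (h : IsSP A S s t) :
    ∀ v ∈ S, (∃ l, IsPath A s v l) ∧ (∃ l, IsPath A v t l) := by
  induction h with
  | base s t hst =>
    intro v hv
    have hpath : IsPath (fun a b => a = s ∧ b = t) s t [s, t] :=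
      ⟨by simp, chain'_iff.mpr (List.chain_cons.mpr ⟨⟨rfl, rfl⟩, .singleton _⟩), by simp, by simp⟩
    simp only [Set.mem_insert_iff, Set.mem_singleton_iff] at hv
    rcases hv with rfl | rfl
    · exact ⟨⟨[v], isPath_single _ v⟩, ⟨_, hpath⟩⟩
    · exact ⟨⟨_, hpath⟩, ⟨[v], isPath_single _ v⟩⟩
  | @series A₁ A₂ S₁ S₂ s m t h1 h2 hI ih1 ih2 =>
    intro v hv
    rcases hv with hv1 | hv2
    · obtain ⟨⟨l1, hl1⟩, ⟨l2, hl2⟩⟩ := ih1 v hv1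
      obtain ⟨_, ⟨l3, hl3⟩⟩ := ih2 m h2.src_mem
      exact ⟨⟨l1, hl1.mono fun a b => Or.inl⟩,
        ⟨l2 ++ l3.tail, isPath_append (hl2.mono fun a b => Or.inl) (hl3.mono fun a b => Or.inr)⟩⟩
    · obtain ⟨⟨l1, hl1⟩, ⟨l2, hl2⟩⟩ := ih2 v hv2
      obtain ⟨⟨l3, hl3⟩, _⟩ := ih1 m h1.tgt_mem
      exact ⟨⟨l3 ++ l1.tail, isPath_append (hl3.mono fun a b => Or.inl) (hl1.mono fun a b => Or.inr)⟩,
        ⟨l2, hl2.mono fun a b => Or.inr⟩⟩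
  | @parallel A₁ A₂ S₁ S₂ s t h1 h2 hI hc1 hc2 ih1 ih2 =>
    intro v hv
    rcases hv with hv1 | hv2
    · obtain ⟨⟨l1, hl1⟩, ⟨l2, hl2⟩⟩ := ih1 v hv1
      exact ⟨⟨l1, hl1.mono fun a b => Or.inl⟩, ⟨l2, hl2.mono fun a b => Or.inl⟩⟩
    · obtain ⟨⟨l1, hl1⟩, ⟨l2, hl2⟩⟩ := ih2 v hv2
      exact ⟨⟨l1, hl1.mono fun a b => Or.inr⟩, ⟨l2, hl2.mono fun a b => Or.inr⟩⟩

lemma mem_of_path {A : V → V → Prop} {S : Set V} {s t i j : V} {l : List V}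
    (h : IsSP A S s t) (hp : IsPath A i j l) (hij : i ≠ j) : i ∈ S ∧ j ∈ S := by
  obtain ⟨hne, hch, hhd, hlast⟩ := hp
  cases l with
  | nil => exact absurd rfl hne
  | cons a r =>
    simp only [List.head?_cons, Option.some_inj] at hhd
    subst hhd
    cases r with
    | nil =>
      simp only [List.getLast?_singleton, Option.some_inj] at hlast
      exact absurd hlast hij
    | cons b r' =>
      have h1 : A a b := (List.isChain_cons_cons.mp hch).1
      obtain ⟨x, hx⟩ := last_arc (b :: r') a j (chain'_iff.mp hch) hlast (by simp)
      exact ⟨(h.arc_mem _ _ h1).1, (h.arc_mem _ _ hx).2⟩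

lemma path_ne_terminals {A : V → V → Prop} {S : Set V} {s t i j : V} {l : List V}
    (h : IsSP A S s t) (hp : IsPath A i j l) (hij : i ≠ j) : i ≠ t ∧ j ≠ s := by
  obtain ⟨hne, hch, hhd, hlast⟩ := hp
  cases l with
  | nil => exact absurd rfl hne
  | cons a r =>
    simp only [List.head?_cons, Option.some_inj] at hhd
    subst hhd
    cases r with
    | nil =>
      simp only [List.getLast?_singleton, Option.some_inj] at hlast
      exact absurd hlast hij
    | cons b r' =>
      have h1 : A a b := (List.isChain_cons_cons.mp hch).1
      obtain ⟨x, hx⟩ := last_arc (b :: r') a j (chain'_iff.mp hch) hlast (by simp)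
      exact ⟨fun h' => h.no_out b (h' ▸ h1), fun h' => h.no_in x (h' ▸ hx)⟩

lemma L0_self {A : V → V → Prop} {S : Set V} {s t : V} (h : IsSP A S s t) {p : V → ℝ}
    {L0 : V → V → ℝ}
    (hL0 : ∀ i j, (∃ l, IsPath A i j l) → IsLongest A p i j (L0 i j)) (v : V) :
    L0 v v = 0 := by
  obtain ⟨⟨l, hl, hlen⟩, _⟩ := hL0 v v ⟨[v], isPath_single A v⟩
  rw [← hlen, h.closed_trivial v l hl, pathLen_single]

lemma ser_split {A₁ A₂ : V → V → Prop} {S₁ S₂ : Set V} {s m t : V}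
    (h1 : IsSP A₁ S₁ s m) (h2 : IsSP A₂ S₂ m t) (hI : S₁ ∩ S₂ = {m}) :
    ∀ (l : List V) (a u : V), a ∈ S₁ → u ∉ S₁ →
      List.Chain (fun a b => A₁ a b ∨ A₂ a b) a l →
      (a :: l).getLast? = some u →
      ∃ l₁ l₂, a :: l = l₁ ++ m :: l₂ ∧ IsPath A₁ a m (l₁ ++ [m]) ∧ IsPath A₂ m u (m :: l₂) := by
  intro l
  induction l with
  | nil =>
    intro a u ha hu _ hlast
    rw [List.getLast?_singleton] at hlast
    obtain rfl := Option.some_inj.mp hlast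
    exact absurd ha hu
  | cons b r ih =>
    intro a u ha hu hch hlast
    obtain ⟨hab, hch'⟩ := List.chain_cons.mp hch
    rw [List.getLast?_cons_cons] at hlast
    by_cases ham : a = m
    · subst ham
      have fwdpack : ∀ x y, x ∈ S₂ → (A₁ x y ∨ A₂ x y) → A₂ x y ∧ y ∈ S₂ := by
        intro x y hx hxy
        rcases hxy with h'' | h''
        · exfalso
          have : x ∈ S₁ ∩ S₂ := ⟨(h1.arc_mem x y h'').1, hx⟩
          rw [hI] at this
          obtain rfl := this
          exact h1.no_out y h''
        · exact ⟨h'', (h2.arc_mem x y h'').2⟩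
      have hA2 : List.Chain A₂ a (b :: r) := chain_fwd fwdpack (b :: r) a h2.src_mem hch
      refine ⟨[], b :: r, rfl, isPath_single A₁ a, ⟨by simp, chain'_iff.mpr hA2, rfl, ?_⟩⟩
      rw [List.getLast?_cons_cons]
      exact hlast
    · have hab1 : A₁ a b := by
        rcases hab with h' | h'
        · exact h'
        · exfalso
          have : a ∈ S₁ ∩ S₂ := ⟨ha, (h2.arc_mem a b h').1⟩
          rw [hI] at this
          exact ham this
      have hb : b ∈ S₁ := (h1.arc_mem a b hab1).2
      obtain ⟨l₁, l₂, heq, P1, P2⟩ := ih b u hb hu hch' hlast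
      refine ⟨a :: l₁, l₂, by rw [List.cons_append, ← heq], ?_, P2⟩
      obtain ⟨hne1, hch1, hhd1, hlast1⟩ := P1
      rw [List.cons_append]
      refine ⟨by simp, ?_, rfl, ?_⟩
      · refine List.isChain_cons.mpr ⟨?_, hch1⟩
        intro y hy
        rw [hhd1] at hy
        simp only [Option.mem_def, Option.some_inj] at hy
        subst hy
        exact hab1
      · rw [getLast?_cons' a (by simp)]
        exact hlast1

end SPProof

namespace SPProof

theorem sp_aux {V : Type*} (p : V → ℝ) (L0 : V → V → ℝ) :
    ∀ {A : V → V → Prop} {S : Set V} {s t : V}, IsSP A S s t →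
    (∀ i j, (∃ l, IsPath A i j l) → IsLongest A p i j (L0 i j)) →
    (∀ i ∈ S, L0 s i + L0 i t = L0 s t) →
    ∀ l, IsPath A s t l → PathLen p l = L0 s t := by
  intro A S s t hSP
  induction hSP with
  | base s t hst =>
    intro hL0 hquasi l hl
    have key : ∀ l', IsPath (fun a b => a = s ∧ b = t) s t l' → l' = [s, t] := by
      intro l' hl'
      obtain ⟨hne, hch, hhd, hlast⟩ := hl'
      cases l' with
      | nil => exact absurd rfl hne
      | cons a r =>
        simp only [List.head?_cons, Option.some_inj] at hhd
        subst hhd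
        cases r with
        | nil =>
          simp only [List.getLast?_singleton, Option.some_inj] at hlast
          exact absurd hlast hst
        | cons b r' =>
          obtain ⟨⟨_, rfl⟩, hch'⟩ := List.isChain_cons_cons.mp hch
          cases r' with
          | nil => rfl
          | cons c r'' =>
            obtain ⟨⟨hts, _⟩, _⟩ := List.isChain_cons_cons.mp hch'
            exact absurd hts.symm hst
    obtain ⟨⟨lw, hw, hlen⟩, _⟩ := hL0 s t ⟨l, hl⟩
    rw [key lw hw] at hlen
    rw [key l hl, hlen]
  | @series A₁ A₂ S₁ S₂ s m t h1 h2 hI ih1 ih2 =>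
    intro hL0 hquasi l hl
    have hSP : IsSP (fun a b => A₁ a b ∨ A₂ a b) (S₁ ∪ S₂) s t := IsSP.series h1 h2 hI
    have hsm : s ≠ m := h1.ne
    have hmt : m ≠ t := h2.ne
    have hmS1 : m ∈ S₁ := h1.tgt_mem
    have hmS2 : m ∈ S₂ := h2.src_mem
    have hsS1 : s ∈ S₁ := h1.src_mem
    have htS2 : t ∈ S₂ := h2.tgt_mem
    have htS1 : t ∉ S₁ := by
      intro ht
      have : t ∈ S₁ ∩ S₂ := ⟨ht, htS2⟩
      rw [hI] at this
      exact hmt (Set.mem_singleton_iff.mp this).symm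
    have mono1 : ∀ (a b : V), A₁ a b → (A₁ a b ∨ A₂ a b) := fun a b => Or.inl
    have mono2 : ∀ (a b : V), A₂ a b → (A₁ a b ∨ A₂ a b) := fun a b => Or.inr
    have fwdpack : ∀ x y, x ∈ S₂ → (A₁ x y ∨ A₂ x y) → A₂ x y ∧ y ∈ S₂ := by
      intro x y hx hxy
      rcases hxy with h'' | h''
      · exfalso
        have : x ∈ S₁ ∩ S₂ := ⟨(h1.arc_mem x y h'').1, hx⟩
        rw [hI] at this
        obtain rfl := this
        exact h1.no_out y h''
      · exact ⟨h'', (h2.arc_mem x y h'').2⟩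
    have bwdpack : ∀ x y, (A₁ x y ∨ A₂ x y) → y ∈ S₁ → A₁ x y ∧ x ∈ S₁ := by
      intro x y hxy hy
      rcases hxy with h'' | h''
      · exact ⟨h'', (h1.arc_mem x y h'').1⟩
      · exfalso
        have : y ∈ S₁ ∩ S₂ := ⟨hy, (h2.arc_mem x y h'').2⟩
        rw [hI] at this
        obtain rfl := this
        exact h2.no_in x h''
    have epath_mt : ∃ lp, IsPath (fun a b => A₁ a b ∨ A₂ a b) m t lp := by
      obtain ⟨_, ⟨lp, hlp⟩⟩ := h2.connect m hmS2
      exact ⟨lp, hlp.mono mono2⟩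
    -- D1 : L0 i t = L0 i m + L0 m t for i ∈ S₁
    have D1 : ∀ i ∈ S₁, L0 i t = L0 i m + L0 m t := by
      intro i hi
      obtain ⟨_, ⟨lim, hlim⟩⟩ := h1.connect i hi
      have eim : ∃ lp, IsPath (fun a b => A₁ a b ∨ A₂ a b) i m lp := ⟨lim, hlim.mono mono1⟩
      obtain ⟨⟨wim, hwim, himlen⟩, ubim⟩ := hL0 i m eim
      obtain ⟨⟨wmt, hwmt, hmtlen⟩, ubmt⟩ := hL0 m t epath_mt
      have eit : ∃ lp, IsPath (fun a b => A₁ a b ∨ A₂ a b) i t lp :=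
        ⟨wim ++ wmt.tail, isPath_append hwim hwmt⟩
      obtain ⟨⟨wit, hwit, hitlen⟩, ubit⟩ := hL0 i t eit
      have hge : L0 i m + L0 m t ≤ L0 i t := by
        refine ubit ⟨wim ++ wmt.tail, isPath_append hwim hwmt, ?_⟩
        rw [pathLen_append p hwim.2.2.2 hwmt.2.2.1, himlen, hmtlen]
      have hle : L0 i t ≤ L0 i m + L0 m t := by
        obtain ⟨hne, hch, hhd, hlast⟩ := hwit
        cases wit with
        | nil => exact absurd rfl hne
        | cons a r =>
          simp only [List.head?_cons, Option.some_inj] at hhd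
          subst hhd
          obtain ⟨l₁, l₂, heq, P1, P2⟩ :=
            ser_split h1 h2 hI r a t hi htS1 (chain'_iff.mp hch) hlast
          have hlen : PathLen p (a :: r) = PathLen p (l₁ ++ [m]) + PathLen p (m :: l₂) := by
            rw [heq]
            have h3 : l₁ ++ m :: l₂ = (l₁ ++ [m]) ++ (m :: l₂).tail := by simp
            rw [h3, pathLen_append p (l' := m :: l₂) P1.2.2.2 rfl]
          have b1 : PathLen p (l₁ ++ [m]) ≤ L0 a m := ubim ⟨_, P1.mono mono1, rfl⟩
          have b2 : PathLen p (m :: l₂) ≤ L0 m t := ubmt ⟨_, P2.mono mono2, rfl⟩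
          rw [← hitlen, hlen]
          exact add_le_add b1 b2
      linarith
    -- D2 : L0 s j = L0 s m + L0 m j for j ∈ S₂
    have D2 : ∀ j ∈ S₂, L0 s j = L0 s m + L0 m j := by
      intro j hj
      by_cases hjm : j = m
      · subst hjm
        rw [L0_self hSP hL0 j]
        ring
      · have hjS1 : j ∉ S₁ := by
          intro hjs
          have : j ∈ S₁ ∩ S₂ := ⟨hjs, hj⟩
          rw [hI] at this
          exact hjm this
        obtain ⟨⟨lsm, hlsm⟩, _⟩ := h1.connect m hmS1
        obtain ⟨⟨lmj, hlmj⟩, _⟩ := h2.connect j hj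
        have esm : ∃ lp, IsPath (fun a b => A₁ a b ∨ A₂ a b) s m lp := ⟨lsm, hlsm.mono mono1⟩
        have emj : ∃ lp, IsPath (fun a b => A₁ a b ∨ A₂ a b) m j lp := ⟨lmj, hlmj.mono mono2⟩
        obtain ⟨⟨wsm, hwsm, hsmlen⟩, ubsm⟩ := hL0 s m esm
        obtain ⟨⟨wmj, hwmj, hmjlen⟩, ubmj⟩ := hL0 m j emj
        have esj : ∃ lp, IsPath (fun a b => A₁ a b ∨ A₂ a b) s j lp :=
          ⟨wsm ++ wmj.tail, isPath_append hwsm hwmj⟩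
        obtain ⟨⟨wsj, hwsj, hsjlen⟩, ubsj⟩ := hL0 s j esj
        have hge : L0 s m + L0 m j ≤ L0 s j := by
          refine ubsj ⟨wsm ++ wmj.tail, isPath_append hwsm hwmj, ?_⟩
          rw [pathLen_append p hwsm.2.2.2 hwmj.2.2.1, hsmlen, hmjlen]
        have hle : L0 s j ≤ L0 s m + L0 m j := by
          obtain ⟨hne, hch, hhd, hlast⟩ := hwsj
          cases wsj with
          | nil => exact absurd rfl hne
          | cons a r =>
            simp only [List.head?_cons, Option.some_inj] at hhd
            subst hhd
            obtain ⟨l₁, l₂, heq, P1, P2⟩ :=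
              ser_split h1 h2 hI r a j hsS1 hjS1 (chain'_iff.mp hch) hlast
            have hlen : PathLen p (a :: r) = PathLen p (l₁ ++ [m]) + PathLen p (m :: l₂) := by
              rw [heq]
              have h3 : l₁ ++ m :: l₂ = (l₁ ++ [m]) ++ (m :: l₂).tail := by simp
              rw [h3, pathLen_append p (l' := m :: l₂) P1.2.2.2 rfl]
            have b1 : PathLen p (l₁ ++ [m]) ≤ L0 a m := ubsm ⟨_, P1.mono mono1, rfl⟩
            have b2 : PathLen p (m :: l₂) ≤ L0 m j := ubmj ⟨_, P2.mono mono2, rfl⟩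
            rw [← hsjlen, hlen]
            exact add_le_add b1 b2
        linarith
    have hsmt : L0 s m + L0 m t = L0 s t := hquasi m (Set.mem_union_left _ hmS1)
    have hq1 : ∀ i ∈ S₁, L0 s i + L0 i m = L0 s m := by
      intro i hi
      have e1 := hquasi i (Set.mem_union_left _ hi)
      have e2 := D1 i hi
      linarith
    have hq2 : ∀ j ∈ S₂, L0 m j + L0 j t = L0 m t := by
      intro j hj
      have e1 := hquasi j (Set.mem_union_right _ hj)
      have e2 := D2 j hj
      linarith
    have hL0₁ : ∀ i j, (∃ lp, IsPath A₁ i j lp) → IsLongest A₁ p i j (L0 i j) := by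
      intro i j he
      obtain ⟨l0, P0⟩ := he
      obtain ⟨⟨lw, Pw, hw⟩, ub⟩ := hL0 i j ⟨l0, P0.mono mono1⟩
      refine ⟨?_, ?_⟩
      · by_cases hij : i = j
        · subst hij
          have hclosed := hSP.closed_trivial i lw Pw
          exact ⟨[i], isPath_single A₁ i, by rw [← hw, hclosed]⟩
        · obtain ⟨hiS, hjS⟩ := mem_of_path h1 P0 hij
          obtain ⟨hne, hch, hhd, hlast⟩ := Pw
          cases lw with
          | nil => exact absurd rfl hne
          | cons a r =>
            simp only [List.head?_cons, Option.some_inj] at hhd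
            subst hhd
            obtain ⟨hC, _⟩ := chain_bwd bwdpack r a j (chain'_iff.mp hch) hlast hjS
            exact ⟨a :: r, ⟨by simp, chain'_iff.mpr hC, rfl, hlast⟩, hw⟩
      · intro r hr
        obtain ⟨lp, Plp, hlp⟩ := hr
        exact ub ⟨lp, Plp.mono mono1, hlp⟩
    have hL0₂ : ∀ i j, (∃ lp, IsPath A₂ i j lp) → IsLongest A₂ p i j (L0 i j) := by
      intro i j he
      obtain ⟨l0, P0⟩ := he
      obtain ⟨⟨lw, Pw, hw⟩, ub⟩ := hL0 i j ⟨l0, P0.mono mono2⟩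
      refine ⟨?_, ?_⟩
      · by_cases hij : i = j
        · subst hij
          have hclosed := hSP.closed_trivial i lw Pw
          exact ⟨[i], isPath_single A₂ i, by rw [← hw, hclosed]⟩
        · obtain ⟨hiS, hjS⟩ := mem_of_path h2 P0 hij
          obtain ⟨hne, hch, hhd, hlast⟩ := Pw
          cases lw with
          | nil => exact absurd rfl hne
          | cons a r =>
            simp only [List.head?_cons, Option.some_inj] at hhd
            subst hhd
            have hC := chain_fwd fwdpack r a hiS (chain'_iff.mp hch)
            exact ⟨a :: r, ⟨by simp, chain'_iff.mpr hC, rfl, hlast⟩, hw⟩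
      · intro r hr
        obtain ⟨lp, Plp, hlp⟩ := hr
        exact ub ⟨lp, Plp.mono mono2, hlp⟩
    obtain ⟨hne, hch, hhd, hlast⟩ := hl
    cases l with
    | nil => exact absurd rfl hne
    | cons a r =>
      simp only [List.head?_cons, Option.some_inj] at hhd
      subst hhd
      obtain ⟨l₁, l₂, heq, P1, P2⟩ :=
        ser_split h1 h2 hI r a t hsS1 htS1 (chain'_iff.mp hch) hlast
      have e1 := ih1 hL0₁ hq1 (l₁ ++ [m]) P1
      have e2 := ih2 hL0₂ hq2 (m :: l₂) P2
      have hlen : PathLen p (a :: r) = PathLen p (l₁ ++ [m]) + PathLen p (m :: l₂) := by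
        rw [heq]
        have h3 : l₁ ++ m :: l₂ = (l₁ ++ [m]) ++ (m :: l₂).tail := by simp
        rw [h3, pathLen_append p (l' := m :: l₂) P1.2.2.2 rfl]
      rw [hlen, e1, e2, hsmt]
  | @parallel A₁ A₂ S₁ S₂ s t h1 h2 hI hc1 hc2 ih1 ih2 =>
    intro hL0 hquasi l hl
    have hSP : IsSP (fun a b => A₁ a b ∨ A₂ a b) (S₁ ∪ S₂) s t :=
      IsSP.parallel h1 h2 hI hc1 hc2
    have hst : s ≠ t := h1.ne
    have mono1 : ∀ (a b : V), A₁ a b → (A₁ a b ∨ A₂ a b) := fun a b => Or.inl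
    have mono2 : ∀ (a b : V), A₂ a b → (A₁ a b ∨ A₂ a b) := fun a b => Or.inr
    have prop1 : ∀ x y z, A₁ x y → (A₁ y z ∨ A₂ y z) → A₁ y z := by
      intro x y z hxy hyz
      rcases hyz with h' | h'
      · exact h'
      · exfalso
        have hy : y ∈ S₁ ∩ S₂ := ⟨(h1.arc_mem x y hxy).2, (h2.arc_mem y z h').1⟩
        rw [hI] at hy
        simp only [Set.mem_insert_iff, Set.mem_singleton_iff] at hy
        rcases hy with rfl | rfl
        · exact h1.no_in x hxy
        · exact h2.no_out z h'
    have prop2 : ∀ x y z, A₂ x y → (A₁ y z ∨ A₂ y z) → A₂ y z := by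
      intro x y z hxy hyz
      rcases hyz with h' | h'
      · exfalso
        have hy : y ∈ S₁ ∩ S₂ := ⟨(h1.arc_mem y z h').1, (h2.arc_mem x y hxy).2⟩
        rw [hI] at hy
        simp only [Set.mem_insert_iff, Set.mem_singleton_iff] at hy
        rcases hy with rfl | rfl
        · exact h2.no_in x hxy
        · exact h1.no_out z h'
      · exact h'
    have pathcase : ∀ {i j : V} {lw : List V},
        IsPath (fun a b => A₁ a b ∨ A₂ a b) i j lw → i ≠ j →
        (IsPath A₁ i j lw ∨ IsPath A₂ i j lw) := by
      intro i j lw hP hij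
      obtain ⟨hne, hch, hhd, hlast⟩ := hP
      cases lw with
      | nil => exact absurd rfl hne
      | cons a r =>
        simp only [List.head?_cons, Option.some_inj] at hhd
        subst hhd
        cases r with
        | nil =>
          simp only [List.getLast?_singleton, Option.some_inj] at hlast
          exact absurd hlast hij
        | cons b r' =>
          obtain ⟨hib, hch1⟩ := List.chain_cons.mp (chain'_iff.mp hch)
          rcases hib with h' | h'
          · exact Or.inl ⟨by simp, chain'_iff.mpr
              (List.chain_cons.mpr ⟨h', chain_prop prop1 r' a b h' hch1⟩), rfl, hlast⟩
          · exact Or.inr ⟨by simp, chain'_iff.mpr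
              (List.chain_cons.mpr ⟨h', chain_prop prop2 r' a b h' hch1⟩), rfl, hlast⟩
    have interior : ∀ (T : Set V), 2 < T.ncard → ∃ v, v ∈ T ∧ v ≠ s ∧ v ≠ t := by
      intro T hT
      by_contra hcon
      push_neg at hcon
      have hsub : T ⊆ ({s, t} : Set V) := by
        intro v hv
        by_cases h's : v = s
        · exact Set.mem_insert_iff.mpr (Or.inl h's)
        · exact Set.mem_insert_iff.mpr (Or.inr (hcon v hv h's))
      have hle := Set.ncard_le_ncard hsub ((Set.finite_singleton t).insert s)
      have h2' : ({s, t} : Set V).ncard ≤ 2 := by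
        have := Set.ncard_insert_le s ({t} : Set V)
        rw [Set.ncard_singleton] at this
        omega
      omega
    -- transfer of hL0 for a side
    have transfer : ∀ (B C : V → V → Prop) (SB SC : Set V),
        IsSP B SB s t → IsSP C SC s t →
        (∀ (a b : V), B a b → (A₁ a b ∨ A₂ a b)) →
        (∀ (a b : V), C a b → (A₁ a b ∨ A₂ a b)) →
        (∀ {i j : V} {lw : List V},
          IsPath (fun a b => A₁ a b ∨ A₂ a b) i j lw → i ≠ j →
          (IsPath B i j lw ∨ IsPath C i j lw)) →
        SB ∩ SC = {s, t} → 2 < SB.ncard → SB ⊆ S₁ ∪ S₂ →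
        ∀ i j, (∃ lp, IsPath B i j lp) → IsLongest B p i j (L0 i j) := by
      intro B C SB SC hB hC monoB monoC pc hBC hcard hsub' i j he
      obtain ⟨l0, P0⟩ := he
      obtain ⟨⟨lw, Pw, hw⟩, ub⟩ := hL0 i j ⟨l0, P0.mono monoB⟩
      refine ⟨?_, ?_⟩
      · by_cases hij : i = j
        · subst hij
          have hclosed := hSP.closed_trivial i lw Pw
          exact ⟨[i], isPath_single B i, by rw [← hw, hclosed]⟩
        · obtain ⟨hiS, hjS⟩ := mem_of_path hB P0 hij
          by_cases hijst : i = s ∧ j = t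
          · obtain ⟨rfl, rfl⟩ := hijst
            obtain ⟨v, hv, hvs, hvt⟩ := interior SB hcard
            obtain ⟨⟨lsv, hsv⟩, ⟨lvt, hvt'⟩⟩ := hB.connect v hv
            obtain ⟨⟨wsv, Psv, hsvlen⟩, _⟩ := hL0 i v ⟨lsv, hsv.mono monoB⟩
            obtain ⟨⟨wvt, Pvt, hvtlen⟩, _⟩ := hL0 v j ⟨lvt, hvt'.mono monoB⟩
            have Psv1 : IsPath B i v wsv := by
              rcases pc Psv (fun h' => hvs h'.symm) with h' | h'
              · exact h'
              · exfalso
                obtain ⟨_, hv2⟩ := mem_of_path hC h' (fun h'' => hvs h''.symm)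
                have : v ∈ SB ∩ SC := ⟨hv, hv2⟩
                rw [hBC] at this
                simp only [Set.mem_insert_iff, Set.mem_singleton_iff] at this
                rcases this with rfl | rfl
                · exact hvs rfl
                · exact hvt rfl
            have Pvt1 : IsPath B v j wvt := by
              rcases pc Pvt hvt with h' | h'
              · exact h'
              · exfalso
                obtain ⟨hv2, _⟩ := mem_of_path hC h' hvt
                have : v ∈ SB ∩ SC := ⟨hv, hv2⟩
                rw [hBC] at this
                simp only [Set.mem_insert_iff, Set.mem_singleton_iff] at this
                rcases this with rfl | rfl
                · exact hvs rfl
                · exact hvt rfl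
            refine ⟨wsv ++ wvt.tail, isPath_append Psv1 Pvt1, ?_⟩
            rw [pathLen_append p Psv1.2.2.2 Pvt1.2.2.1, hsvlen, hvtlen]
            exact hquasi v (hsub' hv)
          · rcases pc Pw hij with h' | h'
            · exact ⟨lw, h', hw⟩
            · exfalso
              obtain ⟨hiC, hjC⟩ := mem_of_path hC h' hij
              have hi' : i ∈ SB ∩ SC := ⟨hiS, hiC⟩
              have hj' : j ∈ SB ∩ SC := ⟨hjS, hjC⟩
              rw [hBC] at hi' hj'
              simp only [Set.mem_insert_iff, Set.mem_singleton_iff] at hi' hj'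
              obtain ⟨hnt, hns⟩ := path_ne_terminals hC h' hij
              rcases hi' with rfl | rfl
              · rcases hj' with rfl | rfl
                · exact hij rfl
                · exact hijst ⟨rfl, rfl⟩
              · exact hnt rfl
      · intro r hr
        obtain ⟨lp, Plp, hlp⟩ := hr
        exact ub ⟨lp, Plp.mono monoB, hlp⟩
    have pathcase' : ∀ {i j : V} {lw : List V},
        IsPath (fun a b => A₁ a b ∨ A₂ a b) i j lw → i ≠ j →
        (IsPath A₂ i j lw ∨ IsPath A₁ i j lw) := by
      intro i j lw hP hij
      exact (pathcase hP hij).symm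
    have hI' : S₂ ∩ S₁ = {s, t} := by rw [Set.inter_comm]; exact hI
    have hL0₁ := transfer A₁ A₂ S₁ S₂ h1 h2 mono1 mono2 (fun hP hij => pathcase hP hij)
      hI hc1 Set.subset_union_left
    have hL0₂ := transfer A₂ A₁ S₂ S₁ h2 h1 mono2 mono1 (fun hP hij => pathcase' hP hij)
      hI' hc2 Set.subset_union_right
    have hq1 : ∀ i ∈ S₁, L0 s i + L0 i t = L0 s t :=
      fun i hi => hquasi i (Set.mem_union_left _ hi)
    have hq2 : ∀ i ∈ S₂, L0 s i + L0 i t = L0 s t :=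
      fun i hi => hquasi i (Set.mem_union_right _ hi)
    rcases pathcase hl hst with h' | h'
    · exact ih1 hL0₁ hq1 l h'
    · exact ih2 hL0₂ hq2 l h'

end SPProof

/-- series-parallel critical lemma: if `G` is series-parallel with
terminals `s`, `t` and `G(p)` is quasi-critical (`L⁰(s,i) + L⁰(i,t) = L⁰(s,t)` for
every vertex `i`), then `G(p)` is critical (every `s`–`t` path has length `L⁰(s,t)`). -/
theorem series_parallel_quasicritical_implies_critical
    {V : Type*} (A : V → V → Prop) (S : Set V) (s t : V)
    (hSP : IsSP A S s t)
    (p : V → ℝ) (hp : ∀ v, 0 ≤ p v)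
    (L0 : V → V → ℝ)
    (hL0 : ∀ i j, (∃ l, IsPath A i j l) → IsLongest A p i j (L0 i j))
    (hquasi : ∀ i ∈ S, L0 s i + L0 i t = L0 s t) :
    ∀ l : List V, IsPath A s t l → PathLen p l = L0 s t := by
  exact SPProof.sp_aux p L0 hSP hL0 hquasi
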